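/- Kontsevich–Zagier representation: ∫₀¹ ∫ₓ¹ ∫_y¹ 1/((1−x)·y·z) dz dy dx = ζ(3). -/

import Mathlib

open MeasureTheory Set Real

-- exp(-t) maps Ioi 0 onto Ioo 0 1
lemma kz_img : (fun t => Real.exp (-t)) '' Set.Ioi (0:ℝ) = Set.Ioo 0 1 := by
  ext x
  simp only [Set.mem_image, Set.mem_Ioi, Set.mem_Ioo]
  constructor
  · rintro ⟨t, ht, rfl⟩
    exact ⟨Real.exp_pos _, by rw [Real.exp_lt_one_iff]; linarith⟩
  · rintro ⟨hx0, hx1⟩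
    refine ⟨-Real.log x, ?_, by rw [neg_neg, Real.exp_log hx0]⟩
    have := Real.log_neg hx0 hx1
    linarith

lemma kz_deriv : ∀ t ∈ Set.Ioi (0:ℝ),
    HasDerivWithinAt (fun t => Real.exp (-t)) (-Real.exp (-t)) (Set.Ioi 0) t := by
  intro t _
  have h := (Real.hasDerivAt_exp (-t)).comp t (hasDerivAt_neg t)
  exact h.hasDerivWithinAt.congr_deriv (by ring)

lemma kz_inj : Set.InjOn (fun t => Real.exp (-t)) (Set.Ioi (0:ℝ)) := by
  intro a _ b _ h
  have := Real.exp_injective h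
  linarith

lemma kz_key1 (n : ℕ) :
    ∫ x in Set.Ioo (0:ℝ) 1, x ^ n * (Real.log x) ^ 2 = 2 / ((n:ℝ) + 1) ^ 3 := by
  have hnn : (0:ℝ) < (n:ℝ) + 1 := by positivity
  rw [← kz_img, integral_image_eq_integral_abs_deriv_smul measurableSet_Ioi kz_deriv kz_inj]
  have hcongr : ∀ t ∈ Set.Ioi (0:ℝ),
      |(-Real.exp (-t))| • ((Real.exp (-t)) ^ n * (Real.log (Real.exp (-t))) ^ 2)
        = t ^ ((3:ℝ) - 1) * Real.exp (-(((n:ℝ) + 1) * t)) := by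
    intro t ht
    rw [abs_neg, abs_of_pos (Real.exp_pos _), Real.log_exp, smul_eq_mul]
    have h1 : Real.exp (-t) * Real.exp (-t) ^ n = Real.exp (-(((n:ℝ) + 1) * t)) := by
      rw [← Real.exp_nat_mul, ← Real.exp_add]
      congr 1
      ring
    have h2 : t ^ ((3:ℝ) - 1) = t ^ (2:ℕ) := by
      rw [show (3:ℝ) - 1 = ((2:ℕ):ℝ) by norm_num, Real.rpow_natCast]
    rw [h2, neg_sq]
    rw [← h1]
    ring
  rw [setIntegral_congr_fun measurableSet_Ioi hcongr,
    Real.integral_rpow_mul_exp_neg_mul_Ioi (by norm_num) hnn]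
  have hg : Real.Gamma 3 = 2 := by
    have := Real.Gamma_nat_eq_factorial 2
    norm_num at this
    convert this using 2; norm_num
  rw [show ((1:ℝ) / ((n:ℝ)+1)) ^ (3:ℝ) = ((1:ℝ)/((n:ℝ)+1)) ^ (3:ℕ) by
    rw [show (3:ℝ) = ((3:ℕ):ℝ) by norm_num, Real.rpow_natCast], hg, div_pow, one_pow]
  ring

lemma kz_key1_int (n : ℕ) :
    MeasureTheory.IntegrableOn (fun x => x ^ n * (Real.log x) ^ 2) (Set.Ioo (0:ℝ) 1) := by
  rw [← kz_img,
    integrableOn_image_iff_integrableOn_abs_deriv_smul measurableSet_Ioi kz_deriv kz_inj]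
  have hnn : (0:ℝ) < (n:ℝ) + 1 := by positivity
  have h := integrableOn_rpow_mul_exp_neg_mul_rpow (p := 1) (s := 2) (b := (n:ℝ) + 1)
    (by norm_num) one_pos hnn
  refine (h.congr_fun ?_ measurableSet_Ioi)
  intro t ht
  show t ^ (2:ℝ) * Real.exp (-((n:ℝ)+1) * t ^ (1:ℝ))
      = |(-Real.exp (-t))| • ((Real.exp (-t)) ^ n * (Real.log (Real.exp (-t))) ^ 2)
  rw [abs_neg, abs_of_pos (Real.exp_pos _), Real.log_exp, smul_eq_mul]
  have h1 : Real.exp (-t) * Real.exp (-t) ^ n = Real.exp (-(((n:ℝ) + 1) * t)) := by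
    rw [← Real.exp_nat_mul, ← Real.exp_add]; congr 1; ring
  rw [Real.rpow_one, show t ^ (2:ℝ) = t ^ (2:ℕ) by
    rw [show (2:ℝ) = ((2:ℕ):ℝ) by norm_num, Real.rpow_natCast], neg_sq,
    show -(((n:ℝ)+1)) * t = -(((n:ℝ)+1) * t) by ring, ← h1]
  ring

-- double inner integral
lemma kz_key2 {x : ℝ} (hx : x ∈ Set.Ioo (0:ℝ) 1) :
    (∫ y in Set.Ioo x 1, ∫ z in Set.Ioo y 1, 1 / ((1 - x) * y * z))
      = (Real.log x) ^ 2 / (2 * (1 - x)) := by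
  obtain ⟨hx0, hx1⟩ := hx
  have hinner : ∀ y ∈ Set.Ioo x 1,
      (∫ z in Set.Ioo y 1, 1 / ((1 - x) * y * z))
        = (1 / (1 - x)) * (-Real.log y / y) := by
    intro y hy
    obtain ⟨hy0, hy1⟩ := hy
    have hy0' : (0:ℝ) < y := lt_trans hx0 hy0
    rw [← MeasureTheory.integral_Ioc_eq_integral_Ioo,
      ← intervalIntegral.integral_of_le hy1.le]
    have : ∀ z : ℝ, 1 / ((1 - x) * y * z) = (1 / ((1 - x) * y)) * (1 / z) := by
      intro z; field_simp
    simp_rw [this]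
    rw [intervalIntegral.integral_const_mul,
      integral_one_div (by
        intro h
        rcases Set.mem_uIcc.mp h with ⟨h1, _⟩ | ⟨_, h2⟩ <;> linarith)]
    rw [one_div y, Real.log_inv]
    have h1x : (1:ℝ) - x ≠ 0 := by intro h; linarith [sub_eq_zero.mp h]
    field_simp
  rw [setIntegral_congr_fun measurableSet_Ioo hinner,
    ← MeasureTheory.integral_Ioc_eq_integral_Ioo,
    ← intervalIntegral.integral_of_le hx1.le]
  rw [intervalIntegral.integral_const_mul]
  have hftc : ∫ y in x..1, -Real.log y / y = (Real.log x) ^ 2 / 2 := by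
    have hpos : ∀ y ∈ Set.uIcc x 1, (0:ℝ) < y := by
      intro y hy
      rcases Set.mem_uIcc.mp hy with ⟨h1, _⟩ | ⟨h1, _⟩ <;> linarith
    have hderiv : ∀ y ∈ Set.uIcc x 1,
        HasDerivAt (fun y => -(Real.log y) ^ 2 / 2) (-Real.log y / y) y := by
      intro y hy
      have h := ((Real.hasDerivAt_log (hpos y hy).ne').pow 2)
      have h2 := (h.neg).div_const 2
      exact h2.congr_deriv (by push_cast; field_simp)
    have hint : IntervalIntegrable (fun y => -Real.log y / y) MeasureTheory.volume x 1 := by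
      apply ContinuousOn.intervalIntegrable
      apply ContinuousOn.div
      · exact (Real.continuousOn_log.mono (by
          intro y hy
          exact (hpos y hy).ne')).neg
      · exact continuousOn_id
      · intro y hy; exact (hpos y hy).ne'
    rw [intervalIntegral.integral_eq_sub_of_hasDerivAt hderiv hint]
    simp [Real.log_one]
    ring
  rw [hftc, one_div, inv_mul_eq_div, div_div]

theorem kontsevich_zagier :
    (∫ x in Set.Ioo (0:ℝ) 1, ∫ y in Set.Ioo x 1, ∫ z in Set.Ioo y 1,
      1 / ((1 - x) * y * z))
    = ∑' n : ℕ, 1 / ((n:ℝ) + 1) ^ 3 := by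
  have hstep1 : (∫ x in Set.Ioo (0:ℝ) 1, ∫ y in Set.Ioo x 1, ∫ z in Set.Ioo y 1,
      1 / ((1 - x) * y * z))
      = ∫ x in Set.Ioo (0:ℝ) 1, ∑' n : ℕ, x ^ n * (Real.log x) ^ 2 / 2 := by
    refine setIntegral_congr_fun measurableSet_Ioo (fun x hx => ?_)
    rw [kz_key2 hx]
    obtain ⟨hx0, hx1⟩ := hx
    have hgeom : ∑' n : ℕ, x ^ n = (1 - x)⁻¹ := tsum_geometric_of_lt_one hx0.le hx1
    calc (Real.log x) ^ 2 / (2 * (1 - x))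
        = (∑' n : ℕ, x ^ n) * ((Real.log x) ^ 2 / 2) := by
          rw [hgeom, inv_mul_eq_div, div_div]
      _ = ∑' n : ℕ, x ^ n * (Real.log x) ^ 2 / 2 := by
          rw [← tsum_mul_right]
          simp [mul_div_assoc]
  rw [hstep1]
  have hint : ∀ n : ℕ, MeasureTheory.Integrable
      (fun x => x ^ n * (Real.log x) ^ 2 / 2)
      (MeasureTheory.volume.restrict (Set.Ioo (0:ℝ) 1)) :=
    fun n => (kz_key1_int n).div_const 2
  have hval : ∀ n : ℕ, (∫ x in Set.Ioo (0:ℝ) 1, x ^ n * (Real.log x) ^ 2 / 2)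
      = 1 / ((n:ℝ) + 1) ^ 3 := by
    intro n
    rw [MeasureTheory.integral_div, kz_key1 n]
    ring
  have hnorm : ∀ n : ℕ, (∫ x in Set.Ioo (0:ℝ) 1, ‖x ^ n * (Real.log x) ^ 2 / 2‖)
      = 1 / ((n:ℝ) + 1) ^ 3 := by
    intro n
    rw [← hval n]
    refine setIntegral_congr_fun measurableSet_Ioo (fun x hx => ?_)
    rw [Real.norm_of_nonneg (div_nonneg (mul_nonneg (pow_nonneg hx.1.le n) (sq_nonneg _)) two_pos.le)]
  have hsum : Summable (fun n : ℕ => ∫ x in Set.Ioo (0:ℝ) 1, ‖x ^ n * (Real.log x) ^ 2 / 2‖) := by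
    simp_rw [hnorm]
    have : Summable (fun n : ℕ => 1 / ((n:ℝ)) ^ 3) := Real.summable_one_div_nat_pow.mpr (by norm_num)
    have h2 := (summable_nat_add_iff 1).mpr this
    refine h2.congr (fun n => ?_)
    push_cast
    ring_nf
  rw [← MeasureTheory.integral_tsum_of_summable_integral_norm hint hsum]
  exact tsum_congr hval
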